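/- Let μ_n be a Borel measure on S_n, E ⊂ ℝ^d a Borel set, and c > 0. If for all x ∈ E ∩ S_n there exists an integer r ≥ 1 with μ_n(B(x,r))/(r/2^n)^s > c, then ν_n^s(E) ≤ (5(2+√d/2))^s μ_n(S_n)/c. -/

import Mathlib

open Metric Set ENNReal MeasureTheory

noncomputable def shell (X : Type*) [NormedAddCommGroup X] (n : ℕ) : Set X :=
  if n = 0 then Metric.ball 0 1 else Metric.ball 0 ((2:ℝ)^n) \ Metric.ball 0 ((2:ℝ)^(n-1))

noncomputable def nuT {X : Type*} [NormedAddCommGroup X] (s : ℝ) (n : ℕ) (E : Set X) : ℝ≥0∞ :=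
  sInf { t : ℝ≥0∞ | ∃ (m : ℕ) (x : Fin m → X) (r : Fin m → ℝ),
    (∀ i, x i ∈ shell X n) ∧ (∀ i, 1 ≤ r i) ∧
    (E ∩ shell X n ⊆ ⋃ i, Metric.ball (x i) (r i)) ∧
    t = ∑ i, ENNReal.ofReal ((r i / 2^n)^s) }

noncomputable def macroDim {X : Type*} [NormedAddCommGroup X] (E : Set X) : ℝ :=
  sInf { s : ℝ | 0 ≤ s ∧ ∑' n, nuT s n E < ⊤ }

def IsIntegerPoint {d : ℕ} (x : EuclideanSpace ℝ (Fin d)) : Prop := ∀ j, ∃ z : ℤ, x j = (z : ℝ)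

def IsProperCover {d : ℕ} (n : ℕ) (E : Set (EuclideanSpace ℝ (Fin d))) {m : ℕ}
    (x : Fin m → EuclideanSpace ℝ (Fin d)) (r : Fin m → ℕ) : Prop :=
  (∀ i, x i ∈ shell (EuclideanSpace ℝ (Fin d)) n) ∧ (∀ i, IsIntegerPoint (x i)) ∧
  (∀ i, 1 ≤ r i) ∧ (E ∩ shell (EuclideanSpace ℝ (Fin d)) n ⊆ ⋃ i, Metric.ball (x i) ((r i : ℝ)))

noncomputable def nuP {d : ℕ} (s : ℝ) (n : ℕ) (E : Set (EuclideanSpace ℝ (Fin d))) : ℝ≥0∞ :=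
  sInf { t : ℝ≥0∞ | ∃ (m : ℕ) (x : Fin m → EuclideanSpace ℝ (Fin d)) (r : Fin m → ℕ),
    IsProperCover n E x r ∧ t = ∑ i, ENNReal.ofReal (((r i : ℝ) / 2^n)^s) }

lemma shell_subset {X : Type*} [NormedAddCommGroup X] (n : ℕ) :
    shell X n ⊆ ball 0 ((2:ℝ)^n) := by
  unfold shell
  split
  · next h => subst h; norm_num
  · exact diff_subset


lemma mem_shell_succ_iff {X : Type*} [NormedAddCommGroup X] {k : ℕ} {x : X} :
    x ∈ shell X (k+1) ↔ (2:ℝ)^k ≤ ‖x‖ ∧ ‖x‖ < 2^(k+1) := by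
  simp [shell, mem_ball_zero_iff, not_lt, and_comm]

lemma exists_int_near {d n : ℕ} (b : EuclideanSpace ℝ (Fin d)) (hb : b ∈ shell _ n) :
    ∃ z : EuclideanSpace ℝ (Fin d), IsIntegerPoint z ∧ z ∈ shell _ n ∧
      dist z b ≤ Real.sqrt 5 * (Real.sqrt d + 1) := by
  have hd0 : (0:ℝ) ≤ Real.sqrt d := Real.sqrt_nonneg _
  have h5 : (1:ℝ) ≤ Real.sqrt 5 := by
    rw [show (1:ℝ) = Real.sqrt 1 by simp]
    exact Real.sqrt_le_sqrt (by norm_num)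
  obtain ⟨k, rfl⟩ | rfl : (∃ k, n = k + 1) ∨ n = 0 := by
    rcases n with _ | k
    · exact Or.inr rfl
    · exact Or.inl ⟨k, rfl⟩
  · -- n = k+1 case
    rw [mem_shell_succ_iff] at hb
    set τ : ℝ := 2^k with hτ
    have hτ1 : (1:ℝ) ≤ τ := one_le_pow₀ (by norm_num)
    have hb2 : ‖b‖ < 2 * τ := by
      have h' := hb.2
      rw [pow_succ] at h'
      linarith
    have hb1 : τ ≤ ‖b‖ := hb.1
    have h2τ : (2:ℝ)^(k+1) = 2*τ := by rw [pow_succ]; ring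
    by_cases hreg : Real.sqrt d + 1 ≤ τ
    · -- Case A: thick shell, radial clamp + rounding
      have hnb : (0:ℝ) < ‖b‖ := lt_of_lt_of_le (by linarith) hb1
      set D : ℝ := Real.sqrt d with hD
      set t : ℝ := max (τ + D/2) (min ‖b‖ (2*τ - D/2 - 1)) with ht
      have h1 : τ + D/2 ≤ t := le_max_left _ _
      have h2 : t ≤ 2*τ - D/2 - 1 := max_le (by linarith) (min_le_right _ _)
      have ht0 : 0 < t := by linarith
      have h3a : t - ‖b‖ ≤ D/2 := by
        have h' : t ≤ max (τ + D/2) ‖b‖ := max_le_max le_rfl (min_le_left _ _)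
        have h'' : max (τ + D/2) ‖b‖ ≤ ‖b‖ + D/2 := max_le (by linarith) (by linarith)
        linarith
      have h3b : ‖b‖ - t ≤ D/2 + 1 := by
        have hmin : min ‖b‖ (2*τ - D/2 - 1) ≤ t := le_max_right _ _
        rcases le_total ‖b‖ (2*τ - D/2 - 1) with hcase | hcase
        · rw [min_eq_left hcase] at hmin; linarith
        · rw [min_eq_right hcase] at hmin; linarith
      set p : EuclideanSpace ℝ (Fin d) := (t / ‖b‖) • b with hp
      have hpnorm : ‖p‖ = t := by
        rw [hp, norm_smul, Real.norm_eq_abs, abs_of_pos (div_pos ht0 hnb),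
          div_mul_cancel₀ _ (ne_of_gt hnb)]
      set z : EuclideanSpace ℝ (Fin d) := (WithLp.equiv 2 _).symm (fun j => (round (p j) : ℝ))
        with hz
      have hzj : ∀ j, z j = (round (p j) : ℝ) := fun j => rfl
      have hzp : dist z p ≤ D/2 := by
        rw [EuclideanSpace.dist_eq]
        have hstep : ∀ j : Fin d, dist (z j) (p j) ^ 2 ≤ (1/2:ℝ)^2 := by
          intro j
          rw [Real.dist_eq]
          have h1 : |z j - p j| ≤ 1/2 := by
            rw [hzj j, abs_sub_comm]; exact abs_sub_round (p j)
          nlinarith [abs_nonneg (z j - p j)]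
        have hsum : (∑ j, dist (z j) (p j) ^ 2) ≤ (d : ℝ) * (1/2)^2 := by
          calc (∑ j, dist (z j) (p j) ^ 2) ≤ ∑ _j : Fin d, (1/2:ℝ)^2 :=
                Finset.sum_le_sum (fun j _ => hstep j)
            _ = (d:ℝ) * (1/2)^2 := by
                simp [Finset.sum_const, Finset.card_univ, nsmul_eq_mul]
        calc Real.sqrt (∑ j, dist (z j) (p j) ^ 2)
            ≤ Real.sqrt ((d:ℝ) * (1/2)^2) := Real.sqrt_le_sqrt hsum
          _ = Real.sqrt d * (1/2) := by
              rw [Real.sqrt_mul (Nat.cast_nonneg d), Real.sqrt_sq (by norm_num)]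
          _ = D/2 := by rw [hD]; ring
      have hbounds := abs_le.mp (abs_norm_sub_norm_le z p)
      have hdzp : ‖z - p‖ ≤ D/2 := by rwa [← dist_eq_norm]
      have hzmem : z ∈ shell (EuclideanSpace ℝ (Fin d)) (k+1) := by
        rw [mem_shell_succ_iff, h2τ]
        rw [hpnorm] at hbounds
        constructor
        · linarith [hbounds.1, hdzp, hτ.ge, hτ.le]
        · linarith [hbounds.2, hdzp]
      refine ⟨z, fun j => ⟨round (p j), hzj j⟩, hzmem, ?_⟩
      have hpb : dist p b = |t - ‖b‖| := by
        have hpb' : p - b = (t / ‖b‖ - 1) • b := by rw [hp, sub_smul, one_smul]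
        rw [dist_eq_norm, hpb', norm_smul, Real.norm_eq_abs]
        rw [show |t / ‖b‖ - 1| * ‖b‖ = |t / ‖b‖ - 1| * |‖b‖| by rw [abs_of_pos hnb],
          ← abs_mul]
        congr 1
        field_simp
      calc dist z b ≤ dist z p + dist p b := dist_triangle _ _ _
        _ ≤ D/2 + |t - ‖b‖| := by rw [hpb]; linarith
        _ ≤ D/2 + (D/2 + 1) := by
            have : |t - ‖b‖| ≤ D/2 + 1 := abs_le.mpr ⟨by linarith, by linarith⟩
            linarith
        _ = D + 1 := by ring
        _ ≤ Real.sqrt 5 * (Real.sqrt d + 1) := by nlinarith [h5, hd0]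
    · -- Case B: thin shell: use ± τ e_j
      push_neg at hreg
      have hτ0 : (0:ℝ) ≤ τ := by positivity
      have hbne : b ≠ 0 := by
        intro h0
        rw [h0, norm_zero] at hb1; linarith
      obtain ⟨j, hj⟩ : ∃ j, b j ≠ 0 := by
        by_contra hcon
        push_neg at hcon
        exact hbne (by ext j; simpa using hcon j)
      set σ : ℝ := if 0 ≤ b j then 1 else -1 with hσ
      set z : EuclideanSpace ℝ (Fin d) := EuclideanSpace.single j (σ * τ) with hz
      have hστ : |σ * τ| = τ := by
        rw [abs_mul, hσ]
        split <;> simp [abs_of_nonneg hτ0]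
      have hznorm : ‖z‖ = τ := by
        rw [hz, EuclideanSpace.norm_single, Real.norm_eq_abs, hστ]
      have hint : IsIntegerPoint z := by
        intro i
        rw [hz, EuclideanSpace.single_apply]
        split
        · refine ⟨if 0 ≤ b j then (2^k : ℤ) else -(2^k : ℤ), ?_⟩
          rw [hσ]
          by_cases hbj : 0 ≤ b j <;> simp [hbj, hτ] <;> push_cast <;> ring
        · exact ⟨0, by simp⟩
      have hzmem : z ∈ shell (EuclideanSpace ℝ (Fin d)) (k+1) := by
        rw [mem_shell_succ_iff, hznorm, h2τ]
        exact ⟨le_rfl, by linarith⟩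
      refine ⟨z, hint, hzmem, ?_⟩
      have hinner : (inner ℝ z b : ℝ) = σ * τ * b j := by
        rw [hz]
        simpa using EuclideanSpace.inner_single_left (𝕜 := ℝ) j (σ * τ) b
      have hσb : 0 ≤ σ * b j := by
        rw [hσ]; split
        · next h => simpa using h
        · next h => push_neg at h; nlinarith
      have hsq : ‖z - b‖^2 ≤ 5 * τ^2 := by
        have hexp : ‖z - b‖^2 = ‖z‖^2 - 2 * (inner ℝ z b : ℝ) + ‖b‖^2 := norm_sub_sq_real z b
        rw [hexp, hinner, hznorm]
        nlinarith [norm_nonneg b]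
      have hfin : ‖z - b‖ ≤ Real.sqrt 5 * τ := by
        rw [show ‖z - b‖ = Real.sqrt (‖z - b‖^2) from (Real.sqrt_sq (norm_nonneg _)).symm]
        calc Real.sqrt (‖z - b‖^2) ≤ Real.sqrt (5 * τ^2) := Real.sqrt_le_sqrt hsq
          _ = Real.sqrt 5 * τ := by
              rw [Real.sqrt_mul (by norm_num), Real.sqrt_sq hτ0]
      rw [dist_eq_norm]
      calc ‖z - b‖ ≤ Real.sqrt 5 * τ := hfin
        _ ≤ Real.sqrt 5 * (Real.sqrt d + 1) := by nlinarith [h5, hd0, hreg]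
  · -- n = 0
    refine ⟨0, fun j => ⟨0, by simp⟩, ?_, ?_⟩
    · simp [shell]
    · rw [show shell (EuclideanSpace ℝ (Fin d)) 0 = ball 0 1 from if_pos rfl,
        mem_ball_zero_iff] at hb
      rw [dist_eq_norm, zero_sub, norm_neg]
      nlinarith [h5, hd0, norm_nonneg b]

/-- Upper bound for `νₙˢ` from a measure with large balls. -/
theorem stmt8 (d n : ℕ) (s : ℝ) (hs : 0 ≤ s)
    (μ : Measure (EuclideanSpace ℝ (Fin d)))
    (hμ : μ (shell (EuclideanSpace ℝ (Fin d)) n)ᶜ = 0)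
    (E : Set (EuclideanSpace ℝ (Fin d))) (hE : MeasurableSet E) (c : ℝ) (hc : 0 < c)
    (h : ∀ x ∈ E ∩ shell (EuclideanSpace ℝ (Fin d)) n, ∃ r : ℕ, 1 ≤ r ∧
      ENNReal.ofReal (c * ((r : ℝ) / 2 ^ n) ^ s) < μ (Metric.ball x (r : ℝ))) :
    nuP s n E ≤ ENNReal.ofReal ((5 * (2 + Real.sqrt d / 2)) ^ s / c)
      * μ (shell (EuclideanSpace ℝ (Fin d)) n) := by
  classical
  set S := shell (EuclideanSpace ℝ (Fin d)) n with hSdef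
  set K : ℝ := 5 * (2 + Real.sqrt d / 2) with hK
  have hd0 : (0:ℝ) ≤ Real.sqrt d := Real.sqrt_nonneg _
  have hK0 : (0:ℝ) < K := by rw [hK]; nlinarith
  have hKc : (0:ℝ) < K ^ s / c := div_pos (Real.rpow_pos_of_pos hK0 s) hc
  -- trivial case
  by_cases hfin : μ S = ∞
  · rw [hfin, ENNReal.mul_top (by rw [ne_eq, ENNReal.ofReal_eq_zero, not_le]; exact hKc)]
    exact le_top
  have hμle : ∀ t : Set (EuclideanSpace ℝ (Fin d)), μ t ≤ μ S := by
    intro t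
    calc μ t ≤ μ (S ∪ Sᶜ) := measure_mono (by simp)
      _ ≤ μ S + μ Sᶜ := measure_union_le _ _
      _ = μ S := by rw [hμ, add_zero]
  -- capped radii
  have key : ∀ x ∈ E ∩ S, ∃ r : ℕ, 1 ≤ r ∧ (r:ℝ) ≤ 2^(n+1) ∧
      ENNReal.ofReal (c * ((r:ℝ)/2^n)^s) < μ (closedBall x (r:ℝ)) := by
    intro x hx
    obtain ⟨r, hr1, hrμ⟩ := h x hx
    rcases le_or_gt (r:ℝ) ((2:ℝ)^(n+1)) with hcap | hcap
    · exact ⟨r, hr1, hcap, lt_of_lt_of_le hrμ (measure_mono ball_subset_closedBall)⟩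
    · refine ⟨2^(n+1), Nat.one_le_two_pow, by push_cast; norm_num, ?_⟩
      have hsub : ball x (r:ℝ) ⊆ ball x (((2^(n+1):ℕ)):ℝ) ∪ Sᶜ := by
        intro y hy
        by_cases hyS : y ∈ S
        · left
          have hx' : x ∈ ball (0:EuclideanSpace ℝ (Fin d)) ((2:ℝ)^n) := shell_subset n hx.2
          have hy' : y ∈ ball (0:EuclideanSpace ℝ (Fin d)) ((2:ℝ)^n) := shell_subset n hyS
          rw [mem_ball, dist_eq_norm] at hx' hy' ⊢
          simp only [sub_zero] at hx' hy'
          have htri : ‖y - x‖ ≤ ‖y‖ + ‖x‖ := norm_sub_le _ _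
          have hcast : (((2^(n+1):ℕ)):ℝ) = 2 * 2^n := by push_cast; ring
          rw [hcast]
          linarith
        · right; exact hyS
      have hμr : μ (ball x (r:ℝ)) ≤ μ (closedBall x (((2^(n+1):ℕ)):ℝ)) := by
        calc μ (ball x (r:ℝ)) ≤ μ (ball x (((2^(n+1):ℕ)):ℝ)) + μ Sᶜ :=
              le_trans (measure_mono hsub) (measure_union_le _ _)
          _ = μ (ball x (((2^(n+1):ℕ)):ℝ)) := by rw [hμ, add_zero]
          _ ≤ μ (closedBall x (((2^(n+1):ℕ)):ℝ)) := measure_mono ball_subset_closedBall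
      refine lt_of_le_of_lt ?_ (lt_of_lt_of_le hrμ hμr)
      apply ENNReal.ofReal_le_ofReal
      apply mul_le_mul_of_nonneg_left _ hc.le
      apply Real.rpow_le_rpow (by positivity) _ hs
      apply (div_le_div_iff_of_pos_right (by positivity)).mpr
      push_cast
      exact le_of_lt hcap
  choose! rx hrx1 hrxC hrxμ using key
  -- Vitali
  obtain ⟨u, huT, hud, hucov⟩ :=
    Vitali.exists_disjoint_subfamily_covering_enlargement_closedBall (E ∩ S) id
      (fun x => (rx x : ℝ)) (2^(n+1)) (fun a ha => hrxC a ha) 5 (by norm_num)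
  simp only [id] at hud hucov
  -- finiteness of u
  have hε : (0:ℝ≥0∞) < ENNReal.ofReal (c * ((1:ℝ)/2^n)^s) := by
    rw [ENNReal.ofReal_pos]
    have : (0:ℝ) < ((1:ℝ)/2^n)^s := Real.rpow_pos_of_pos (by positivity) s
    nlinarith
  have hεle : ∀ x ∈ E ∩ S, ENNReal.ofReal (c * ((1:ℝ)/2^n)^s) ≤ μ (closedBall x (rx x : ℝ)) := by
    intro x hx
    refine le_of_lt (lt_of_le_of_lt ?_ (hrxμ x hx))
    apply ENNReal.ofReal_le_ofReal
    apply mul_le_mul_of_nonneg_left _ hc.le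
    apply Real.rpow_le_rpow (by positivity) _ hs
    apply (div_le_div_iff_of_pos_right (by positivity)).mpr
    exact_mod_cast hrx1 x hx
  have hufin : u.Finite := by
    rw [← Set.finite_coe_iff]
    have hdisj : Pairwise (Function.onFun Disjoint (fun i : u => closedBall (i : EuclideanSpace ℝ (Fin d)) (rx i : ℝ))) := by
      intro i j hij
      exact hud i.2 j.2 (Subtype.coe_injective.ne hij)
    have hne : μ (⋃ i : u, closedBall (i : EuclideanSpace ℝ (Fin d)) (rx i : ℝ)) ≠ ∞ :=
      ((hμle _).trans_lt (Ne.lt_top hfin)).ne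
    have hfinset := MeasureTheory.Measure.finite_const_le_meas_of_disjoint_iUnion μ hε
      (fun i => measurableSet_closedBall) hdisj hne
    have huniv : {i : u | ENNReal.ofReal (c * ((1:ℝ)/2^n)^s)
        ≤ μ (closedBall (i : EuclideanSpace ℝ (Fin d)) (rx i : ℝ))} = Set.univ := by
      ext i
      simp only [mem_setOf_eq, mem_univ, iff_true]
      exact hεle i (huT i.2)
    rw [huniv] at hfinset
    exact Set.finite_univ_iff.mp hfinset
  -- enumerate
  set u' := hufin.toFinset with hu'
  set m := u'.card with hm
  set e := u'.equivFin with he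
  have hidxu : ∀ i : Fin m, ((e.symm i : EuclideanSpace ℝ (Fin d))) ∈ u := by
    intro i
    exact hufin.mem_toFinset.mp (e.symm i).2
  have hidxES : ∀ i : Fin m, ((e.symm i : EuclideanSpace ℝ (Fin d))) ∈ E ∩ S :=
    fun i => huT (hidxu i)
  -- integer points near centers
  have hzkey : ∀ b ∈ S, ∃ z : EuclideanSpace ℝ (Fin d), IsIntegerPoint z ∧ z ∈ S ∧
      dist z b ≤ Real.sqrt 5 * (Real.sqrt d + 1) := fun b hb => exists_int_near b hb
  choose! zf hzf1 hzf2 hzf3 using hzkey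
  -- enlargement constant
  set q : ℕ := 3 + ⌈(5/2) * Real.sqrt d⌉₊ with hq
  have hq_lb : 3 + (5/2) * Real.sqrt d ≤ (q:ℝ) := by
    rw [hq]; push_cast
    have := Nat.le_ceil ((5/2) * Real.sqrt d)
    linarith
  have hq_ub : (q:ℝ) ≤ 4 + (5/2) * Real.sqrt d := by
    rw [hq]; push_cast
    have := Nat.ceil_lt_add_one (show (0:ℝ) ≤ (5/2) * Real.sqrt d by positivity)
    linarith
  have hdistq : Real.sqrt 5 * (Real.sqrt d + 1) < 3 + (5/2) * Real.sqrt d := by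
    have h525 : Real.sqrt 5 ≤ 2.25 := by
      nlinarith [Real.sq_sqrt (show (0:ℝ) ≤ 5 by norm_num), Real.sqrt_nonneg 5]
    nlinarith [Real.sqrt_nonneg 5, hd0]
  -- the cover
  set xs : Fin m → EuclideanSpace ℝ (Fin d) := fun i => zf ((e.symm i : EuclideanSpace ℝ (Fin d))) with hxs
  set rr : Fin m → ℕ := fun i => 5 * rx ((e.symm i : EuclideanSpace ℝ (Fin d))) + q with hrr
  have hq1 : 1 ≤ q := by rw [hq]; exact le_trans (by norm_num) (Nat.le_add_right 3 _)
  have hcover : IsProperCover n E xs rr := by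
    refine ⟨fun i => hzf2 _ (hidxES i).2, fun i => hzf1 _ (hidxES i).2,
      fun i => le_trans hq1 (Nat.le_add_left q _), ?_⟩
    intro y hy
    obtain ⟨b, hbu, hbsub⟩ := hucov y hy
    have hbES : b ∈ E ∩ S := huT hbu
    have hyb : dist y b ≤ 5 * (rx b : ℝ) := by
      have : y ∈ closedBall b (5 * (rx b:ℝ)) :=
        hbsub (mem_closedBall_self (by positivity))
      rwa [mem_closedBall] at this
    have hbu' : b ∈ u' := hufin.mem_toFinset.mpr hbu
    refine mem_iUnion.mpr ⟨e ⟨b, hbu'⟩, ?_⟩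
    have hidxi : ((e.symm (e ⟨b, hbu'⟩) : EuclideanSpace ℝ (Fin d))) = b := by
      rw [Equiv.symm_apply_apply]
    show y ∈ ball (zf ((e.symm (e ⟨b, hbu'⟩) : EuclideanSpace ℝ (Fin d))))
      ((((5 * rx ((e.symm (e ⟨b, hbu'⟩) : EuclideanSpace ℝ (Fin d))) + q) : ℕ)) : ℝ)
    rw [hidxi, mem_ball]
    have hzb : dist (zf b) b ≤ Real.sqrt 5 * (Real.sqrt d + 1) := hzf3 b hbES.2
    have htri : dist y (zf b) ≤ dist y b + dist b (zf b) := dist_triangle _ _ _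
    rw [dist_comm b (zf b)] at htri
    have hcast : (((5 * rx b + q : ℕ)) : ℝ) = 5 * (rx b:ℝ) + (q:ℝ) := by push_cast; ring
    rw [hcast]
    linarith
  -- membership of the sum in the nuP defining set
  have hmem : (∑ i, ENNReal.ofReal (((rr i : ℝ) / 2^n)^s)) ∈
      { t : ℝ≥0∞ | ∃ (m : ℕ) (x : Fin m → EuclideanSpace ℝ (Fin d)) (r : Fin m → ℕ),
        IsProperCover n E x r ∧ t = ∑ i, ENNReal.ofReal (((r i : ℝ) / 2^n)^s) } :=
    ⟨m, xs, rr, hcover, rfl⟩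
  refine le_trans (sInf_le hmem) ?_
  -- bound the sum
  have hstep : ∀ i : Fin m, ENNReal.ofReal (((rr i : ℝ) / 2^n)^s) ≤
      ENNReal.ofReal (K^s / c) * μ (closedBall ((e.symm i : EuclideanSpace ℝ (Fin d)))
        (rx ((e.symm i : EuclideanSpace ℝ (Fin d))) : ℝ)) := by
    intro i
    set b := ((e.symm i : EuclideanSpace ℝ (Fin d))) with hb
    have hrx1i : (1:ℝ) ≤ (rx b : ℝ) := by exact_mod_cast hrx1 _ (hidxES i)
    have hrrc : ((rr i : ℕ):ℝ) = 5 * (rx b:ℝ) + (q:ℝ) := by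
      show (((5 * rx b + q : ℕ)):ℝ) = _
      push_cast; ring
    have hrrK : ((rr i : ℕ):ℝ) ≤ K * (rx b : ℝ) := by
      rw [hrrc, hK]
      nlinarith [hd0, hq_ub]
    have hbase : ((rr i : ℝ) / 2^n)^s ≤ ((K * (rx b:ℝ)) / 2^n)^s := by
      apply Real.rpow_le_rpow (by positivity) _ hs
      exact (div_le_div_iff_of_pos_right (by positivity)).mpr hrrK
    have hsplit : ((K * (rx b:ℝ)) / 2^n)^s = K^s * (((rx b:ℝ) / 2^n))^s := by
      rw [mul_div_assoc]
      exact Real.mul_rpow hK0.le (by positivity)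
    have heq : K^s * (((rx b:ℝ) / 2^n))^s
        = (K^s / c) * (c * (((rx b:ℝ) / 2^n))^s) := by
      field_simp
    calc ENNReal.ofReal (((rr i : ℝ) / 2^n)^s)
        ≤ ENNReal.ofReal ((K^s / c) * (c * (((rx b:ℝ) / 2^n))^s)) := by
          apply ENNReal.ofReal_le_ofReal
          rw [← heq, ← hsplit]; exact hbase
      _ = ENNReal.ofReal (K^s / c) * ENNReal.ofReal (c * (((rx b:ℝ) / 2^n))^s) :=
          ENNReal.ofReal_mul hKc.le
      _ ≤ ENNReal.ofReal (K^s / c) * μ (closedBall b (rx b : ℝ)) :=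
          mul_le_mul_right (le_of_lt (hrxμ _ (hidxES i))) _
  calc (∑ i, ENNReal.ofReal (((rr i : ℝ) / 2^n)^s))
      ≤ ∑ i, ENNReal.ofReal (K^s / c) * μ (closedBall ((e.symm i : EuclideanSpace ℝ (Fin d)))
          (rx ((e.symm i : EuclideanSpace ℝ (Fin d))) : ℝ)) :=
        Finset.sum_le_sum (fun i _ => hstep i)
    _ = ENNReal.ofReal (K^s / c) * ∑ i, μ (closedBall ((e.symm i : EuclideanSpace ℝ (Fin d)))
          (rx ((e.symm i : EuclideanSpace ℝ (Fin d))) : ℝ)) := by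
        rw [Finset.mul_sum]
    _ ≤ ENNReal.ofReal (K^s / c) * μ S := by
        apply mul_le_mul_right
        have hsum : (∑ i : Fin m, μ (closedBall ((e.symm i : EuclideanSpace ℝ (Fin d)))
            (rx ((e.symm i : EuclideanSpace ℝ (Fin d))) : ℝ)))
            = ∑ b ∈ u', μ (closedBall b (rx b : ℝ)) := by
          rw [← Finset.sum_coe_sort u' (fun b => μ (closedBall b (rx b : ℝ)))]
          exact Equiv.sum_comp e.symm
            (fun a : u' => μ (closedBall (a : EuclideanSpace ℝ (Fin d)) (rx a : ℝ)))
        rw [hsum]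
        have hdisj' : (↑u' : Set (EuclideanSpace ℝ (Fin d))).PairwiseDisjoint
            (fun b => closedBall b (rx b : ℝ)) := by
          rw [hu', Set.Finite.coe_toFinset]
          exact hud
        rw [← measure_biUnion_finset hdisj' (fun b _ => measurableSet_closedBall)]
        exact hμle _
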